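/- Let X be a random variable with an absolutely continuous distribution having density p, and let 0 < κ < 1. Then the real line can be partitioned into two Borel sets A_0 and A_1 such that p(x) ≤ p(y) for all x ∈ A_0 and y ∈ A_1, and ∫_{A_0} p(x) dx = κ, ∫_{A_1} p(x) dx = 1 − κ. -/

import Mathlib

open MeasureTheory Set

/-- `p` is a probability density on the real line. -/
def IsProbDensity (p : ℝ → ℝ) : Prop :=
  Measurable p ∧ (∀ x, 0 ≤ p x) ∧ (∫ x, p x = 1)


private lemma qdd_final (p : ℝ → ℝ) (κ m : ℝ) (hInt : Integrable p)
    (h1 : ∫ x, p x = 1) (B : Set ℝ) (hB : MeasurableSet B)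
    (hB1 : {x | p x < m} ⊆ B) (hB2 : B ⊆ {x | p x ≤ m}) (hBκ : ∫ x in B, p x = κ) :
    ∃ A₀ A₁ : Set ℝ,
      MeasurableSet A₀ ∧ MeasurableSet A₁ ∧
      A₀ ∪ A₁ = univ ∧ Disjoint A₀ A₁ ∧
      (∀ x ∈ A₀, ∀ y ∈ A₁, p x ≤ p y) ∧
      (∫ x in A₀, p x = κ) ∧ (∫ x in A₁, p x = 1 - κ) := by
  refine ⟨B, Bᶜ, hB, hB.compl, union_compl_self B, disjoint_compl_right, ?_, hBκ, ?_⟩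
  · intro x hx y hy
    have hy' : m ≤ p y := not_lt.mp (fun h => hy (hB1 h))
    exact le_trans (hB2 hx) hy'
  · have h := integral_add_compl hB hInt (f := p)
    rw [h1, hBκ] at h
    linarith

private theorem quantile_density_decomposition_aux (p : ℝ → ℝ) (κ : ℝ)
    (hp : (Measurable p ∧ (∀ x, 0 ≤ p x) ∧ (∫ x, p x = 1))) (hκ0 : 0 < κ) (hκ1 : κ < 1) :
    ∃ A₀ A₁ : Set ℝ,
      MeasurableSet A₀ ∧ MeasurableSet A₁ ∧
      A₀ ∪ A₁ = univ ∧ Disjoint A₀ A₁ ∧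
      (∀ x ∈ A₀, ∀ y ∈ A₁, p x ≤ p y) ∧
      (∫ x in A₀, p x = κ) ∧ (∫ x in A₁, p x = 1 - κ) := by
  obtain ⟨hmp, hnn, hint1⟩ := hp
  have hInt : Integrable p := by
    by_contra h
    rw [integral_undef h] at hint1; norm_num at hint1
  set F : ℝ → ℝ := fun t => ∫ x in {x | p x ≤ t}, p x with hFdef
  have hmeasle : ∀ t, MeasurableSet {x | p x ≤ t} := fun t =>
    measurableSet_le hmp measurable_const
  have hmono_int : ∀ s t : Set ℝ, s ⊆ t → ∫ x in s, p x ≤ ∫ x in t, p x := fun s t hst =>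
    setIntegral_mono_set hInt.integrableOn (ae_of_all _ hnn) (HasSubset.Subset.eventuallyLE hst)
  have hFmono : Monotone F := fun s t hst =>
    hmono_int _ _ (fun x hx => le_trans hx hst)
  -- F t → 1 along ℕ
  have hunion_univ : (⋃ n : ℕ, {x | p x ≤ (n : ℝ)}) = univ := by
    ext x
    simp only [mem_iUnion, mem_setOf_eq, mem_univ, iff_true]
    obtain ⟨n, hn⟩ := exists_nat_ge (p x)
    exact ⟨n, hn⟩
  have hT1 : Filter.Tendsto (fun n : ℕ => F (n : ℝ)) Filter.atTop (nhds 1) := by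
    have := tendsto_setIntegral_of_monotone (f := p) (μ := volume)
      (s := fun n : ℕ => {x | p x ≤ (n : ℝ)})
      (fun n => hmeasle _) (fun a b hab x hx => le_trans (α := ℝ) hx (by exact_mod_cast hab))
      (by rw [hunion_univ]; exact hInt.integrableOn)
    rwa [hunion_univ, setIntegral_univ, hint1] at this
  -- the set T
  set T : Set ℝ := {t | κ ≤ F t} with hTdef
  have hTne : T.Nonempty := by
    have hlt : κ < 1 := hκ1
    have := hT1.eventually (eventually_ge_nhds hlt)
    obtain ⟨n, hn⟩ := this.exists
    exact ⟨(n : ℝ), hn⟩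
  have hF0 : ∀ t ≤ 0, F t = 0 := by
    intro t ht
    have : ∀ x ∈ {x | p x ≤ t}, p x = (0:ℝ) := fun x hx =>
      le_antisymm (le_trans hx ht) (hnn x)
    rw [hFdef]
    calc ∫ x in {x | p x ≤ t}, p x = ∫ _x in {x | p x ≤ t}, (0:ℝ) :=
          setIntegral_congr_fun (hmeasle t) this
      _ = 0 := integral_zero _ _
  have hTbdd : BddBelow T := by
    refine ⟨0, fun t ht => ?_⟩
    by_contra h
    push_neg at h
    have := hF0 t h.le
    rw [hTdef] at ht
    simp only [mem_setOf_eq, this] at ht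
    linarith
  set m : ℝ := sInf T with hmdef
  have hright : κ ≤ F m := by
    have hanti : Antitone (fun n : ℕ => {x | p x ≤ m + 1/((n:ℝ)+1)}) := by
      intro a b hab x hx
      refine le_trans (α := ℝ) hx ?_
      have h1 : 1/((b:ℝ)+1) ≤ 1/((a:ℝ)+1) := by
        apply one_div_le_one_div_of_le (by positivity)
        exact_mod_cast add_le_add_left (Nat.cast_le.mpr hab) 1
      linarith
    have hinter : (⋂ n : ℕ, {x | p x ≤ m + 1/((n:ℝ)+1)}) = {x | p x ≤ m} := by
      ext x
      simp only [mem_iInter, mem_setOf_eq]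
      constructor
      · intro h
        by_contra hc
        push_neg at hc
        obtain ⟨n, hn⟩ := exists_nat_one_div_lt (sub_pos.mpr hc)
        have := h n
        linarith
      · intro h n
        have : (0:ℝ) < 1/((n:ℝ)+1) := by positivity
        linarith
    have htd := tendsto_setIntegral_of_antitone (f := p) (μ := volume)
      (s := fun n : ℕ => {x | p x ≤ m + 1/((n:ℝ)+1)})
      (fun n => hmeasle _) hanti ⟨0, hInt.integrableOn⟩
    rw [hinter] at htd
    refine ge_of_tendsto htd ?_
    filter_upwards with n
    have hlt : m < m + 1/((n:ℝ)+1) := lt_add_of_pos_right m (by positivity)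
    obtain ⟨t, htT, htlt⟩ := (csInf_lt_iff hTbdd hTne).mp hlt
    exact le_trans htT (hFmono htlt.le)
  have hleft : ∫ x in {x | p x < m}, p x ≤ κ := by
    have hmono2 : Monotone (fun n : ℕ => {x | p x ≤ m - 1/((n:ℝ)+1)}) := by
      intro a b hab x hx
      refine le_trans (α := ℝ) hx ?_
      have h1 : 1/((b:ℝ)+1) ≤ 1/((a:ℝ)+1) := by
        apply one_div_le_one_div_of_le (by positivity)
        exact_mod_cast add_le_add_left (Nat.cast_le.mpr hab) 1
      linarith
    have hun : (⋃ n : ℕ, {x | p x ≤ m - 1/((n:ℝ)+1)}) = {x | p x < m} := by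
      ext x
      simp only [mem_iUnion, mem_setOf_eq]
      constructor
      · rintro ⟨n, hn⟩
        have : (0:ℝ) < 1/((n:ℝ)+1) := by positivity
        linarith
      · intro h
        obtain ⟨n, hn⟩ := exists_nat_one_div_lt (sub_pos.mpr h)
        exact ⟨n, by linarith⟩
    have htd := tendsto_setIntegral_of_monotone (f := p) (μ := volume)
      (s := fun n : ℕ => {x | p x ≤ m - 1/((n:ℝ)+1)})
      (fun n => hmeasle _) hmono2 (by rw [hun]; exact hInt.integrableOn)
    rw [hun] at htd
    refine le_of_tendsto htd ?_
    filter_upwards with n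
    by_contra h
    push_neg at h
    have hmem : m - 1/((n:ℝ)+1) ∈ T := h.le
    have := csInf_le hTbdd hmem
    have hpos : (0:ℝ) < 1/((n:ℝ)+1) := by positivity
    rw [← hmdef] at this
    linarith
  have hmpos : 0 < m := by
    by_contra h
    push_neg at h
    have h1 := hF0 m h
    linarith
  set E : Set ℝ := {x | p x = m} with hEdef
  have hEmeas : MeasurableSet E := hmp (measurableSet_singleton m)
  have hEfin : volume E < ⊤ :=
    lt_of_le_of_lt (measure_mono (fun x hx => le_of_eq hx.symm)) (hInt.measure_ge_lt_top hmpos)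
  have hsplit : F m = (∫ x in {x | p x < m}, p x) + ∫ x in E, p x := by
    have hset : {x | p x ≤ m} = {x | p x < m} ∪ E := by
      ext x
      simp only [mem_setOf_eq, mem_union, hEdef]
      exact ⟨fun h => h.lt_or_eq, fun h => h.elim le_of_lt le_of_eq⟩
    have hdisj : Disjoint {x | p x < m} E := by
      rw [disjoint_left]
      intro x hx hx'
      exact absurd hx' (ne_of_lt hx)
    rw [hFdef]
    simp only []
    rw [hset, setIntegral_union hdisj hEmeas hInt.integrableOn hInt.integrableOn]
  have hEint : ∫ x in E, p x = m * (volume E).toReal := by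
    rw [setIntegral_congr_fun (f := p) (g := fun _ => m) hEmeas (fun x hx => hx),
      setIntegral_const, smul_eq_mul, mul_comm]; rfl
  set I := ∫ x in {x | p x < m}, p x with hIdef
  set δ := κ - I with hδdef
  have hδ0 : 0 ≤ δ := by rw [hδdef]; linarith
  have hκFm : κ ≤ I + m * (volume E).toReal := by
    rw [← hEint, ← hsplit]; exact hright
  have hδle : δ ≤ m * (volume E).toReal := by rw [hδdef]; linarith
  have hlt_meas : MeasurableSet {x | p x < m} := measurableSet_lt hmp measurable_const
  rcases eq_or_lt_of_le hδ0 with h0 | h0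
  · refine qdd_final p κ m hInt hint1 {x | p x < m} hlt_meas subset_rfl
      (fun x hx => show p x ≤ m from le_of_lt hx) ?_
    rw [← hIdef]; linarith
  rcases eq_or_lt_of_le hδle with h1 | h1
  · refine qdd_final p κ m hInt hint1 {x | p x ≤ m} (hmeasle m)
      (fun x hx => show p x ≤ m from le_of_lt hx) subset_rfl ?_
    have : (∫ x in {x | p x ≤ m}, p x) = F m := rfl
    rw [this, hsplit, hEint]
    linarith
  · -- intermediate case
    set h : ℝ → ℝ := fun s => (volume (E ∩ Iic s)).toReal with hhdef
    have hfin : ∀ s : ℝ, volume (E ∩ Iic s) ≠ ⊤ := fun s =>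
      (lt_of_le_of_lt (measure_mono inter_subset_left) hEfin).ne
    have hmonoh : Monotone h := by
      intro a b hab
      exact ENNReal.toReal_le_toReal (hfin a) (hfin b) |>.mpr
        (measure_mono (inter_subset_inter_right _ (Iic_subset_Iic.mpr hab)))
    have key : ∀ a b : ℝ, a ≤ b → h b ≤ h a + (b - a) := by
      intro a b hab
      have hsub : E ∩ Iic b ⊆ (E ∩ Iic a) ∪ Ioc a b := by
        rintro x ⟨hxE, hxb⟩
        rcases le_or_gt x a with h' | h'
        · exact Or.inl ⟨hxE, h'⟩
        · exact Or.inr ⟨h', hxb⟩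
      have hIocfin : volume (Ioc a b) ≠ ⊤ := by
        rw [Real.volume_Ioc]; exact ENNReal.ofReal_ne_top
      have h1' : volume (E ∩ Iic b) ≤ volume (E ∩ Iic a) + volume (Ioc a b) :=
        (measure_mono hsub).trans (measure_union_le _ _)
      calc h b ≤ ((volume (E ∩ Iic a)) + volume (Ioc a b)).toReal :=
            ENNReal.toReal_le_toReal (hfin b)
              (ENNReal.add_ne_top.mpr ⟨hfin a, hIocfin⟩) |>.mpr h1'
        _ = h a + (b - a) := by
            rw [ENNReal.toReal_add (hfin a) hIocfin, Real.volume_Ioc,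
              ENNReal.toReal_ofReal (by linarith)]
    have hcont : Continuous h := by
      have hlip : LipschitzWith 1 h := by
        apply LipschitzWith.of_dist_le_mul
        intro a b
        rw [Real.dist_eq, Real.dist_eq, NNReal.coe_one, one_mul]
        rcases le_total a b with hab | hab
        · have h1' := key a b hab
          have h2' := hmonoh hab
          rw [abs_of_nonpos (by linarith), abs_of_nonpos (by linarith)]
          linarith
        · have h1' := key b a hab
          have h2' := hmonoh hab
          rw [abs_of_nonneg (by linarith), abs_of_nonneg (by linarith)]
          linarith
      exact hlip.continuous
    have hδm_pos : 0 < δ / m := div_pos h0 hmpos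
    have hδm_lt : δ / m < (volume E).toReal := by
      rw [div_lt_iff₀ hmpos]
      linarith [h1]
    have htb : Filter.Tendsto (fun n : ℕ => h (n:ℝ)) Filter.atTop
        (nhds (volume E).toReal) := by
      have hsets : Monotone (fun n : ℕ => E ∩ Iic ((n:ℝ))) := fun a b hab =>
        inter_subset_inter_right _ (Iic_subset_Iic.mpr (Nat.cast_le.mpr hab))
      have hu : (⋃ n : ℕ, E ∩ Iic ((n:ℝ))) = E := by
        rw [← inter_iUnion]
        have : (⋃ n : ℕ, Iic ((n:ℝ))) = univ := by
          ext x
          simp only [mem_iUnion, mem_Iic, mem_univ, iff_true]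
          exact exists_nat_ge x
        rw [this, inter_univ]
      have ht := tendsto_measure_iUnion_atTop (μ := volume) hsets
      rw [hu] at ht
      exact (ENNReal.tendsto_toReal hEfin.ne).comp ht
    have hta : Filter.Tendsto (fun n : ℕ => h (-(n:ℝ))) Filter.atTop (nhds 0) := by
      have hanti : Antitone (fun n : ℕ => E ∩ Iic (-(n:ℝ))) := fun a b hab =>
        inter_subset_inter_right _ (Iic_subset_Iic.mpr (neg_le_neg (Nat.cast_le.mpr hab)))
      have hi : (⋂ n : ℕ, E ∩ Iic (-(n:ℝ))) = ∅ := by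
        ext x
        simp only [mem_iInter, mem_inter_iff, mem_Iic, mem_empty_iff_false, iff_false,
          not_forall]
        obtain ⟨n, hn⟩ := exists_nat_gt (-x)
        exact ⟨n, fun hc => by linarith [hc.2]⟩
      have ht := tendsto_measure_iInter_atTop
        (fun n => (hEmeas.inter measurableSet_Iic).nullMeasurableSet) hanti ⟨0, hfin _⟩
      rw [hi, measure_empty] at ht
      have := (ENNReal.tendsto_toReal (a := 0) (by simp)).comp ht
      rw [ENNReal.toReal_zero] at this; exact this
    obtain ⟨b, hb⟩ := (htb.eventually (eventually_gt_nhds hδm_lt)).exists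
    obtain ⟨a, ha⟩ := (hta.eventually (eventually_lt_nhds hδm_pos)).exists
    have hab : -(a:ℝ) ≤ (b:ℝ) := by
      by_contra hc
      push_neg at hc
      have := hmonoh hc.le
      linarith
    obtain ⟨s, _, hs⟩ := intermediate_value_Icc hab hcont.continuousOn ⟨ha.le, hb.le⟩
    have hdisj : Disjoint {x | p x < m} (E ∩ Iic s) := by
      rw [disjoint_left]
      rintro x hx ⟨hx', _⟩
      exact absurd hx' (ne_of_lt hx)
    refine qdd_final p κ m hInt hint1 ({x | p x < m} ∪ (E ∩ Iic s))
      (hlt_meas.union (hEmeas.inter measurableSet_Iic)) subset_union_left ?_ ?_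
    · rintro x (hx | ⟨hx, _⟩)
      · exact le_of_lt (show p x < m from hx)
      · exact le_of_eq (show p x = m from hx)
    · rw [setIntegral_union hdisj (hEmeas.inter measurableSet_Iic)
        hInt.integrableOn hInt.integrableOn]
      have hEs : ∫ x in E ∩ Iic s, p x = m * h s := by
        rw [setIntegral_congr_fun (f := p) (g := fun _ => m)
          (hEmeas.inter measurableSet_Iic) (fun x hx => hx.1),
          setIntegral_const, smul_eq_mul, mul_comm]; rfl
      rw [hEs, hs, mul_div_cancel₀ _ (ne_of_gt hmpos), ← hIdef]
      linarith


/-- Proposition 4.1 (quantile density decomposition): if `X` is a random variable with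
density `p` and `0 < κ < 1`, then the real line can be partitioned into two Borel sets
`A₀`, `A₁` such that `p(x) ≤ p(y)` for all `x ∈ A₀`, `y ∈ A₁`, and
`∫_{A₀} p = κ`, `∫_{A₁} p = 1 - κ`. -/
theorem quantile_density_decomposition (p : ℝ → ℝ) (κ : ℝ)
    (hp : IsProbDensity p) (hκ0 : 0 < κ) (hκ1 : κ < 1) :
    ∃ A₀ A₁ : Set ℝ,
      MeasurableSet A₀ ∧ MeasurableSet A₁ ∧
      A₀ ∪ A₁ = univ ∧ Disjoint A₀ A₁ ∧
      (∀ x ∈ A₀, ∀ y ∈ A₁, p x ≤ p y) ∧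
      (∫ x in A₀, p x = κ) ∧ (∫ x in A₁, p x = 1 - κ) := by
  exact quantile_density_decomposition_aux p κ hp hκ0 hκ1
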